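/- Every graph that admits a 2-track layout is a forest (contains no cycle). -/

import Mathlib

/-- In a cycle, every support vertex has two distinct neighbors along the cycle. -/
lemma exists_two_nbrs {V : Type*} [_inst : DecidableEq V] {G : SimpleGraph V} {v x : V}
    {c : G.Walk v v} (hc : c.IsCycle) (hx : x ∈ c.support) :
    ∃ b₁ b₂ : V, b₁ ≠ b₂ ∧ s(x, b₁) ∈ c.edges ∧ s(x, b₂) ∈ c.edges := by
  have hrot : (c.rotate x hx).IsCycle := hc.rotate hx
  have hlen : (c.rotate x hx).length = c.length := by
    rw [SimpleGraph.Walk.rotate, SimpleGraph.Walk.length_append]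
    have := congrArg SimpleGraph.Walk.length (c.take_spec hx)
    rw [SimpleGraph.Walk.length_append] at this
    omega
  have hedges : ∀ e, e ∈ (c.rotate x hx).edges → e ∈ c.edges :=
    fun e he => (c.rotate_edges x hx).mem_iff.mp he
  have h3 := hc.three_le_length
  set c' := c.rotate x hx with hc'
  clear_value c'
  cases c' with
  | nil => exact absurd rfl hrot.ne_nil
  | @cons _ b₁ _ h q =>
    rw [SimpleGraph.Walk.cons_isCycle_iff] at hrot
    obtain ⟨hq, hne⟩ := hrot
    have hqlen : q.reverse.length ≠ 0 := by
      simp only [SimpleGraph.Walk.length_cons] at hlen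
      simp only [SimpleGraph.Walk.length_reverse]
      omega
    cases hqr : q.reverse with
    | nil => rw [hqr] at hqlen; simp at hqlen
    | @cons _ b₂ _ h₂ r =>
      refine ⟨b₁, b₂, ?_, ?_, ?_⟩
      · rintro rfl
        apply hne
        have : s(x, b₁) ∈ q.reverse.edges := by rw [hqr]; simp
        rw [SimpleGraph.Walk.edges_reverse, List.mem_reverse] at this
        exact this
      · apply hedges; simp
      · apply hedges
        have : s(x, b₂) ∈ q.reverse.edges := by rw [hqr]; simp
        rw [SimpleGraph.Walk.edges_reverse, List.mem_reverse] at this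
        simp [this]

/-- Every graph that admits a 2-track layout is a forest.  A 2-track layout is
given by a track assignment `t : V → Fin 2` whose classes are independent sets
(each linearly ordered, here via the linear order on `V`), such that no two
edges between the two tracks X-cross. -/
theorem stmt4 {V : Type*} [LinearOrder V] (G : SimpleGraph V) (t : V → Fin 2)
    (hind : ∀ u v, G.Adj u v → t u ≠ t v)
    (hx : ∀ a b a' b' : V, G.Adj a b → G.Adj a' b' → t a = t a' → t b = t b' →
      ¬ (a < a' ∧ b' < b)) :
    G.IsAcyclic := by
  classical
  intro v c hc
  obtain ⟨a, ha⟩ : ∃ a, c.support.maximum = some a := by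
    cases h : c.support.maximum with
    | bot =>
      exact absurd (List.maximum_eq_bot.mp h) c.support_ne_nil
    | coe a => exact ⟨a, rfl⟩
  have haS : a ∈ c.support := List.maximum_mem ha
  have hmax : ∀ y ∈ c.support, y ≤ a := fun y hy => List.le_maximum_of_mem hy ha
  have fin2 : ∀ x y z : Fin 2, x ≠ z → y ≠ z → x = y := by decide
  have key : ∀ b₁ b₂ : V, b₁ < b₂ → s(a, b₁) ∈ c.edges → s(a, b₂) ∈ c.edges → False := by
    intro b₁ b₂ hlt he1 he2
    have hb₂S : b₂ ∈ c.support := c.snd_mem_support_of_mem_edges he2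
    obtain ⟨a₁, a₂, ha12, hf1, hf2⟩ := exists_two_nbrs hc hb₂S
    obtain ⟨a', ha'ne, hf'⟩ : ∃ a', a' ≠ a ∧ s(b₂, a') ∈ c.edges := by
      by_cases h1 : a₁ = a
      · exact ⟨a₂, fun h2 => ha12 (h1.trans h2.symm), hf2⟩
      · exact ⟨a₁, h1, hf1⟩
    have hadj1 : G.Adj a b₁ := c.adj_of_mem_edges he1
    have hadj2 : G.Adj a b₂ := c.adj_of_mem_edges he2
    have hadj' : G.Adj a' b₂ := (c.adj_of_mem_edges hf').symm
    have ha'lt : a' < a :=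
      lt_of_le_of_ne (hmax a' (c.snd_mem_support_of_mem_edges hf')) ha'ne
    have t1 : t a' = t a := fin2 _ _ _ (hind a' b₂ hadj') (hind a b₂ hadj2)
    have t2 : t b₂ = t b₁ :=
      fin2 _ _ _ (fun h => hind a b₂ hadj2 h.symm) (fun h => hind a b₁ hadj1 h.symm)
    exact hx a' b₂ a b₁ hadj' hadj1 t1 t2 ⟨ha'lt, hlt⟩
  obtain ⟨b₁, b₂, hb12, he1, he2⟩ := exists_two_nbrs hc haS
  rcases hb12.lt_or_gt with h | h
  · exact key b₁ b₂ h he1 he2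
  · exact key b₂ b₁ h he2 he1
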